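/- Let R be a ring. The intersection of all left ideals of R of finite additive index equals the intersection of all right ideals of R of finite additive index, and this common intersection is a two-sided ideal of R. -/

import Mathlib

/-- An additive subgroup of a ring which is closed under left multiplication. -/
def IsLeftIdeal {R : Type*} [NonUnitalRing R] (I : AddSubgroup R) : Prop :=
  ∀ r : R, ∀ x ∈ I, r * x ∈ I

/-- An additive subgroup of a ring which is closed under right multiplication. -/
def IsRightIdeal {R : Type*} [NonUnitalRing R] (I : AddSubgroup R) : Prop :=
  ∀ r : R, ∀ x ∈ I, x * r ∈ I

section Aux

variable {R : Type*} [NonUnitalRing R]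

private instance auxFiniteHom {A B : Type*} [AddGroup A] [Finite A] [AddCommGroup B]
    [Finite B] : Finite (A →+ B) :=
  Finite.of_injective (fun f => (f : A → B)) DFunLike.coe_injective

/-- Every finite-index left ideal contains a finite-index two-sided ideal. -/
private lemma exists_twoSided_le_left (I : AddSubgroup R) (hI : IsLeftIdeal I)
    (hind : I.index ≠ 0) :
    ∃ J : AddSubgroup R, IsLeftIdeal J ∧ IsRightIdeal J ∧ J.index ≠ 0 ∧ J ≤ I := by
  have hfin : Finite (R ⧸ I) := (Nat.card_ne_zero.mp hind).2
  -- the additive map sending `x` to left-multiplication by `x` on `R ⧸ I`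
  let lam : R →+ (R ⧸ I →+ R ⧸ I) :=
    { toFun := fun x => QuotientAddGroup.map I I (AddMonoidHom.mulLeft x)
        (show I ≤ I.comap (AddMonoidHom.mulLeft x) from fun a ha => hI x a ha)
      map_zero' := by
        ext r
        simp [QuotientAddGroup.map_mk]
      map_add' := by
        intro x y
        ext r
        simp [QuotientAddGroup.map_mk, add_mul] }
  have hlam : ∀ x : R, x ∈ lam.ker ↔ ∀ r : R, x * r ∈ I := by
    intro x
    constructor
    · intro hx r
      have : lam x (QuotientAddGroup.mk r) = 0 := by
        rw [AddMonoidHom.mem_ker.mp hx]; rfl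
      simpa [lam, QuotientAddGroup.map_mk, QuotientAddGroup.eq_zero_iff] using this
    · intro h
      rw [AddMonoidHom.mem_ker]
      ext r
      simpa [lam, QuotientAddGroup.map_mk, QuotientAddGroup.eq_zero_iff] using h r
  have hker : lam.ker.index ≠ 0 := by
    rw [AddSubgroup.index_ker]
    exact Nat.card_ne_zero.mpr ⟨⟨0, 0, map_zero lam⟩, Set.toFinite _⟩
  refine ⟨I ⊓ lam.ker, ?_, ?_, AddSubgroup.index_inf_ne_zero hind hker, inf_le_left⟩
  · rintro s x ⟨hx1, hx2⟩
    refine ⟨hI s x hx1, (hlam _).mpr fun r => ?_⟩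
    rw [mul_assoc]
    exact hI s _ ((hlam x).mp hx2 r)
  · rintro s x ⟨hx1, hx2⟩
    refine ⟨(hlam x).mp hx2 s, (hlam _).mpr fun r => ?_⟩
    rw [mul_assoc]
    exact (hlam x).mp hx2 (s * r)

/-- Every finite-index right ideal contains a finite-index two-sided ideal. -/
private lemma exists_twoSided_le_right (I : AddSubgroup R) (hI : IsRightIdeal I)
    (hind : I.index ≠ 0) :
    ∃ J : AddSubgroup R, IsLeftIdeal J ∧ IsRightIdeal J ∧ J.index ≠ 0 ∧ J ≤ I := by
  have hfin : Finite (R ⧸ I) := (Nat.card_ne_zero.mp hind).2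
  -- the additive map sending `x` to right-multiplication by `x` on `R ⧸ I`
  let lam : R →+ (R ⧸ I →+ R ⧸ I) :=
    { toFun := fun x => QuotientAddGroup.map I I (AddMonoidHom.mulRight x)
        (show I ≤ I.comap (AddMonoidHom.mulRight x) from fun a ha => hI x a ha)
      map_zero' := by
        ext r
        simp [QuotientAddGroup.map_mk]
      map_add' := by
        intro x y
        ext r
        simp [QuotientAddGroup.map_mk, mul_add] }
  have hlam : ∀ x : R, x ∈ lam.ker ↔ ∀ r : R, r * x ∈ I := by
    intro x
    constructor
    · intro hx r
      have : lam x (QuotientAddGroup.mk r) = 0 := by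
        rw [AddMonoidHom.mem_ker.mp hx]; rfl
      simpa [lam, QuotientAddGroup.map_mk, QuotientAddGroup.eq_zero_iff] using this
    · intro h
      rw [AddMonoidHom.mem_ker]
      ext r
      simpa [lam, QuotientAddGroup.map_mk, QuotientAddGroup.eq_zero_iff] using h r
  have hker : lam.ker.index ≠ 0 := by
    rw [AddSubgroup.index_ker]
    exact Nat.card_ne_zero.mpr ⟨⟨0, 0, map_zero lam⟩, Set.toFinite _⟩
  refine ⟨I ⊓ lam.ker, ?_, ?_, AddSubgroup.index_inf_ne_zero hind hker, inf_le_left⟩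
  · rintro s x ⟨hx1, hx2⟩
    refine ⟨(hlam x).mp hx2 s, (hlam _).mpr fun r => ?_⟩
    rw [← mul_assoc]
    exact (hlam x).mp hx2 (r * s)
  · rintro s x ⟨hx1, hx2⟩
    refine ⟨hI s x hx1, (hlam _).mpr fun r => ?_⟩
    rw [← mul_assoc]
    exact hI s _ ((hlam x).mp hx2 r)

end Aux

/-- In any ring `R`, the intersection of all left ideals of finite additive index
equals the intersection of all right ideals of finite additive index, and this common
intersection is a two-sided ideal of `R`. -/
theorem inf_finite_index_left_ideals_eq_right {R : Type*} [NonUnitalRing R] :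
    (⨅ I ∈ {I : AddSubgroup R | IsLeftIdeal I ∧ I.index ≠ 0}, I) =
      (⨅ I ∈ {I : AddSubgroup R | IsRightIdeal I ∧ I.index ≠ 0}, I) ∧
    (IsLeftIdeal (⨅ I ∈ {I : AddSubgroup R | IsLeftIdeal I ∧ I.index ≠ 0}, I) ∧
     IsRightIdeal (⨅ I ∈ {I : AddSubgroup R | IsLeftIdeal I ∧ I.index ≠ 0}, I)) := by
  have heq : (⨅ I ∈ {I : AddSubgroup R | IsLeftIdeal I ∧ I.index ≠ 0}, I) =
      (⨅ I ∈ {I : AddSubgroup R | IsRightIdeal I ∧ I.index ≠ 0}, I) := by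
    apply le_antisymm
    · refine le_iInf₂ fun I hI => ?_
      obtain ⟨J, hJl, hJr, hJi, hJle⟩ := exists_twoSided_le_right I hI.1 hI.2
      exact le_trans (iInf₂_le J ⟨hJl, hJi⟩) hJle
    · refine le_iInf₂ fun I hI => ?_
      obtain ⟨J, hJl, hJr, hJi, hJle⟩ := exists_twoSided_le_left I hI.1 hI.2
      exact le_trans (iInf₂_le J ⟨hJr, hJi⟩) hJle
  refine ⟨heq, ?_, ?_⟩
  · intro r x hx
    simp only [AddSubgroup.mem_iInf] at hx ⊢
    exact fun I hI => hI.1 r x (hx I hI)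
  · rw [heq]
    intro r x hx
    simp only [AddSubgroup.mem_iInf] at hx ⊢
    exact fun I hI => hI.1 r x (hx I hI)
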